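/- arXiv:1112.6234 — 9 statements merged into one kernel-verified Lean document; each statement's English description precedes it below -/
import Mathlib

section
/- Suppose w ∈ R^n satisfies ‖w‖₁ ≥ α√n·‖w‖₂ for some α ∈ (0,1], and K ⊆ {1,...,n} has cardinality k with 1 ≤ k < n. If β := ‖w_K‖₁ / ‖w‖₁ (assuming w ≠ 0), then β²/k + (1-β)²/(n-k) ≤ 1/(α²n). -/
open Finset
noncomputable section
open scoped Classical

def l1 {n : ℕ} (w : Fin n → ℝ) : ℝ := ∑ i, |w i|
def l2 {n : ℕ} (w : Fin n → ℝ) : ℝ := Real.sqrt (∑ i, (w i)^2)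
def restr {n : ℕ} (w : Fin n → ℝ) (K : Finset (Fin n)) : Fin n → ℝ := fun i => if i ∈ K then w i else 0
def l0 {n : ℕ} (w : Fin n → ℝ) : ℕ := (Finset.univ.filter (fun i => w i ≠ 0)).card

theorem stmt1 {n : ℕ} (w : Fin n → ℝ) (K : Finset (Fin n)) (k : ℕ) (α β : ℝ)
    (hα0 : 0 < α) (hα1 : α ≤ 1)
    (hAE : l1 w ≥ α * Real.sqrt n * l2 w)
    (hK : K.card = k) (hk1 : 1 ≤ k) (hkn : k < n)
    (hw : w ≠ 0)
    (hβ : β = l1 (restr w K) / l1 w) :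
    β ^ 2 / k + (1 - β) ^ 2 / (n - k : ℝ) ≤ 1 / (α ^ 2 * n) := by
  obtain ⟨i0, hi0⟩ := Function.ne_iff.mp hw
  simp only [Pi.zero_apply] at hi0
  set A := ∑ i ∈ K, |w i| with hA
  set B := ∑ i ∈ Kᶜ, |w i| with hB
  have hA0 : 0 ≤ A := Finset.sum_nonneg fun _ _ => abs_nonneg _
  have hB0 : 0 ≤ B := Finset.sum_nonneg fun _ _ => abs_nonneg _
  have hl1 : l1 w = A + B := (Finset.sum_add_sum_compl K _).symm
  have hrestr : l1 (restr w K) = A := by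
    rw [l1, hA]
    rw [← Finset.sum_filter_add_sum_filter_not Finset.univ (· ∈ K)]
    have h1 : ∀ i ∈ Finset.univ.filter (· ∈ K), |restr w K i| = |w i| := by
      intro i hi; simp [restr, (Finset.mem_filter.mp hi).2]
    have h2 : ∀ i ∈ Finset.univ.filter (¬ · ∈ K), |restr w K i| = 0 := by
      intro i hi; simp [restr, (Finset.mem_filter.mp hi).2]
    rw [Finset.sum_congr rfl h1, Finset.sum_eq_zero h2, add_zero]
    congr 1
    ext i; simp
  set S := ∑ i, (w i)^2 with hS
  have hSpos : 0 < S := by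
    apply Finset.sum_pos' (fun i _ => sq_nonneg _)
    exact ⟨i0, Finset.mem_univ _, by positivity⟩
  have hLpos : 0 < A + B := by
    rw [← hl1, l1]
    apply Finset.sum_pos' (fun i _ => abs_nonneg _)
    exact ⟨i0, Finset.mem_univ _, abs_pos.mpr hi0⟩
  have hSsplit : S = (∑ i ∈ K, (w i)^2) + ∑ i ∈ Kᶜ, (w i)^2 :=
    (Finset.sum_add_sum_compl K _).symm
  have hCS1 : A ^ 2 ≤ k * ∑ i ∈ K, (w i)^2 := by
    have := sq_sum_le_card_mul_sum_sq (s := K) (f := fun i => |w i|)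
    simpa [hK, sq_abs] using this
  have hCS2 : B ^ 2 ≤ (n - k : ℝ) * ∑ i ∈ Kᶜ, (w i)^2 := by
    have := sq_sum_le_card_mul_sum_sq (s := Kᶜ) (f := fun i => |w i|)
    have hcard : (#(Kᶜ) : ℝ) = (n - k : ℝ) := by
      rw [Finset.card_compl, hK, Fintype.card_fin, Nat.cast_sub hkn.le]
    simpa [hcard, sq_abs] using this
  have hkpos : (0:ℝ) < k := by exact_mod_cast hk1
  have hnkpos : (0:ℝ) < (n - k : ℝ) := by
    have : (k:ℝ) < n := by exact_mod_cast hkn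
    linarith
  have hnpos : (0:ℝ) < n := by exact_mod_cast (Nat.zero_le k).trans_lt hkn
  have hmain : A ^ 2 / k + B ^ 2 / (n - k : ℝ) ≤ S := by
    rw [hSsplit]
    have h1 : A ^ 2 / k ≤ ∑ i ∈ K, (w i)^2 := by
      rw [div_le_iff₀ hkpos]; linarith [hCS1]
    have h2 : B ^ 2 / (n - k : ℝ) ≤ ∑ i ∈ Kᶜ, (w i)^2 := by
      rw [div_le_iff₀ hnkpos]; linarith [hCS2]
    linarith
  have hAE2 : α ^ 2 * n * S ≤ (A + B) ^ 2 := by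
    have hl2 : l2 w = Real.sqrt S := rfl
    have h : α * Real.sqrt n * Real.sqrt S ≤ A + B := by
      rw [← hl1, ← hl2]; exact hAE
    have hnn : 0 ≤ α * Real.sqrt n * Real.sqrt S := by positivity
    calc α ^ 2 * n * S = (α * Real.sqrt n * Real.sqrt S) ^ 2 := by
          rw [mul_pow, mul_pow, Real.sq_sqrt hnpos.le, Real.sq_sqrt hSpos.le]
      _ ≤ (A + B) ^ 2 := by apply pow_le_pow_left₀ hnn h
  have hβA : β = A / (A + B) := by rw [hβ, hrestr, hl1]
  have h1β : 1 - β = B / (A + B) := by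
    rw [hβA]; field_simp; ring
  rw [h1β, hβA, div_pow, div_pow, div_div, div_div, div_add_div _ _ (by positivity) (by positivity)]
  rw [div_le_div_iff₀ (by positivity) (by positivity)]
  have key : A ^ 2 * ((A+B)^2 * (n-k:ℝ)) + (A+B)^2 * k * B^2
      = (A+B)^2 * ((A^2/k + B^2/(n-k:ℝ)) * (k * (n-k:ℝ))) := by
    field_simp
  calc (A ^ 2 * ((A+B)^2 * (n-k:ℝ)) + (A+B)^2 * k * B^2) * (α^2 * n)
      = (A+B)^2 * ((A^2/k + B^2/(n-k:ℝ)) * (k * (n-k:ℝ))) * (α^2*n) := by rw [key]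
    _ ≤ (A+B)^2 * (S * (k * (n-k:ℝ))) * (α^2*n) := by
        gcongr
    _ = (α^2 * n * S) * ((A+B)^2 * (k*(n-k:ℝ))) := by ring
    _ ≤ (A+B)^2 * ((A+B)^2 * (k*(n-k:ℝ))) := by gcongr
    _ = 1 * ((A+B)^2 * k * ((A+B)^2 * (n-k:ℝ))) := by ring
end
end

section
/- Suppose a nonzero vector w ∈ R^n satisfies ‖w‖₁ ≥ α√n·‖w‖₂ for α ∈ (0,1], and for a set K of cardinality k (1 ≤ k < n) one has C‖w_K‖₁ = ‖w_{K̄}‖₁ for some C ≥ 1. Then n/k + C²·n/(n-k) ≤ (C+1)²/α². -/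
open Finset
noncomputable section
open scoped Classical

set_option maxHeartbeats 800000 in
theorem stmt2 {n : ℕ} (w : Fin n → ℝ) (K : Finset (Fin n)) (k : ℕ) (α C : ℝ)
    (hw : w ≠ 0)
    (hα0 : 0 < α) (hα1 : α ≤ 1)
    (hAE : l1 w ≥ α * Real.sqrt n * l2 w)
    (hK : K.card = k) (hk1 : 1 ≤ k) (hkn : k < n)
    (hC : 1 ≤ C)
    (hbal : C * l1 (restr w K) = l1 (restr w Kᶜ)) :
    (n : ℝ) / k + C ^ 2 * n / (n - k : ℝ) ≤ (C + 1) ^ 2 / α ^ 2 := by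
  set a := ∑ i ∈ K, |w i| with ha
  set b := ∑ i ∈ Kᶜ, |w i| with hb
  set SK := ∑ i ∈ K, (w i)^2 with hSK
  set SKc := ∑ i ∈ Kᶜ, (w i)^2 with hSKc
  have hr : ∀ s : Finset (Fin n), l1 (restr w s) = ∑ i ∈ s, |w i| := by
    intro s
    simp only [l1, restr, apply_ite abs, abs_zero]
    rw [Finset.sum_ite_mem, Finset.univ_inter]
  have hra : l1 (restr w K) = a := hr K
  have hrb : l1 (restr w Kᶜ) = b := hr Kᶜ
  have hsplit : l1 w = a + b := by
    rw [l1, ← Finset.sum_add_sum_compl K]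
  have hbal' : C * a = b := by rw [← hra, ← hrb]; exact hbal
  have hl1pos : 0 < l1 w := by
    obtain ⟨i, hi⟩ : ∃ i, w i ≠ 0 := by
      by_contra h
      push_neg at h
      exact hw (funext h)
    apply Finset.sum_pos' (fun j _ => abs_nonneg _) ⟨i, Finset.mem_univ i, abs_pos.mpr hi⟩
  have ha_pos : 0 < a := by nlinarith [hsplit, hbal', hl1pos]
  have hkpos : (0:ℝ) < k := by exact_mod_cast hk1
  have hnkpos : (0:ℝ) < (n:ℝ) - k := by
    have : (k:ℝ) < n := by exact_mod_cast hkn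
    linarith
  have hKcard : (K.card : ℝ) = k := by exact_mod_cast hK
  have hKccard : (Kᶜ.card : ℝ) = (n:ℝ) - k := by
    rw [Finset.card_compl, Fintype.card_fin, hK]
    push_cast [Nat.cast_sub hkn.le]
    ring
  have hCSa : a^2 ≤ (k:ℝ) * SK := by
    have h := sq_sum_le_card_mul_sum_sq (s := K) (f := fun i => |w i|)
    simpa [sq_abs, hKcard, ← ha, ← hSK] using h
  have hCSb : b^2 ≤ ((n:ℝ) - k) * SKc := by
    have h := sq_sum_le_card_mul_sum_sq (s := Kᶜ) (f := fun i => |w i|)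
    simpa [sq_abs, hKccard, ← hb, ← hSKc] using h
  have hsum : ∑ i, (w i)^2 = SK + SKc := by
    rw [← Finset.sum_add_sum_compl K]
  have hsumnn : 0 ≤ ∑ i, (w i)^2 := Finset.sum_nonneg fun i _ => sq_nonneg _
  have hl2sq : (l2 w)^2 = SK + SKc := by
    rw [l2, Real.sq_sqrt hsumnn, hsum]
  have hlhs_nn : 0 ≤ α * Real.sqrt n * l2 w := by
    have : 0 ≤ l2 w := Real.sqrt_nonneg _
    positivity
  have key : α^2 * n * (SK + SKc) ≤ ((C+1)*a)^2 := by
    have h2 := mul_self_le_mul_self hlhs_nn hAE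
    have hn2 : Real.sqrt n * Real.sqrt n = n := Real.mul_self_sqrt (by positivity)
    have hexp : α * Real.sqrt n * l2 w * (α * Real.sqrt n * l2 w)
        = α^2 * (Real.sqrt n * Real.sqrt n) * (l2 w)^2 := by ring
    rw [hexp, hn2, hl2sq] at h2
    calc α^2 * n * (SK + SKc) ≤ l1 w * l1 w := h2
      _ = ((C+1)*a)^2 := by rw [hsplit, ← hbal']; ring
  rw [div_add_div _ _ (ne_of_gt hkpos) (ne_of_gt hnkpos),
    div_le_div_iff₀ (by positivity) (by positivity)]
  have hb2 : b^2 = C^2 * a^2 := by rw [← hbal']; ring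
  rw [hb2] at hCSb
  nlinarith [mul_le_mul_of_nonneg_left hCSa (by positivity : (0:ℝ) ≤ α^2 * n * ((n:ℝ)-k)),
    mul_le_mul_of_nonneg_left hCSb (by positivity : (0:ℝ) ≤ α^2 * n * (k:ℝ)),
    mul_le_mul_of_nonneg_left key (by positivity : (0:ℝ) ≤ (k:ℝ)*((n:ℝ)-k)),
    mul_pos ha_pos ha_pos, sq_nonneg a]
end
end

section
/- Let H be an n×m real matrix, x ∈ R^m, e ∈ R^n supported on a set K with |K| ≤ k, v ∈ R^n with ‖v‖₂ ≤ ε, and y = Hx + e + v. Suppose: (i) every w in the column range of H satisfies C‖w_K'‖₁ ≤ ‖w_{K̄'}‖₁ for every set K' with |K'| ≤ k, where C > 1; (ii) every w in the range of H satisfies α√n‖w‖₂ ≤ ‖w‖₁ with α ∈ (0,1]; (iii) σ_min > 0 is a lower bound on ‖Hu‖₂/‖u‖₂ for all nonzero u ∈ R^m. Then any pair (x̂, ẑ) with ‖ẑ‖₂ ≤ ε minimizing ‖y − Hx' − z'‖₁ over all (x', z') with ‖z'‖₂ ≤ ε satisfies ‖x − x̂‖₂ ≤ 2(C+1)ε /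 (σ_min·α·(C−1)). -/
open Finset
noncomputable section
open scoped Classical

lemma l1_nonneg {n : ℕ} (w : Fin n → ℝ) : 0 ≤ l1 w :=
  Finset.sum_nonneg fun i _ => abs_nonneg _

lemma l2_nonneg {n : ℕ} (w : Fin n → ℝ) : 0 ≤ l2 w := Real.sqrt_nonneg _

lemma l2_eq_norm {n : ℕ} (w : Fin n → ℝ) :
    l2 w = ‖(WithLp.equiv 2 (Fin n → ℝ)).symm w‖ := by
  rw [EuclideanSpace.norm_eq]
  simp [l2, Real.norm_eq_abs, sq_abs]

lemma l2_sub_le {n : ℕ} (a b : Fin n → ℝ) : l2 (a - b) ≤ l2 a + l2 b := by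
  simp only [l2_eq_norm]
  rw [show (WithLp.equiv 2 (Fin n → ℝ)).symm (a - b)
      = (WithLp.equiv 2 (Fin n → ℝ)).symm a - (WithLp.equiv 2 (Fin n → ℝ)).symm b from rfl]
  exact norm_sub_le _ _

lemma l1_sub_le {n : ℕ} (a b : Fin n → ℝ) : l1 (a - b) ≤ l1 a + l1 b := by
  simp only [l1, ← Finset.sum_add_distrib]
  exact Finset.sum_le_sum fun i _ => by simpa using abs_sub (a i) (b i)

lemma l1_le_sqrt_l2 {n : ℕ} (w : Fin n → ℝ) : l1 w ≤ Real.sqrt n * l2 w := by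
  have h : (l1 w) ^ 2 ≤ (n : ℝ) * ∑ i, (w i) ^ 2 := by
    have := sq_sum_le_card_mul_sum_sq (s := (Finset.univ : Finset (Fin n)))
      (f := fun i => |w i|)
    simpa [l1, sq_abs] using this
  have h1 : l1 w = Real.sqrt ((l1 w) ^ 2) := (Real.sqrt_sq (l1_nonneg w)).symm
  rw [h1, l2, ← Real.sqrt_mul (by positivity)]
  exact Real.sqrt_le_sqrt h

lemma l1_restr {n : ℕ} (w : Fin n → ℝ) (K : Finset (Fin n)) :
    l1 (restr w K) = ∑ i ∈ K, |w i| := by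
  rw [l1]
  rw [show (∑ i, |restr w K i|) = ∑ i : Fin n, if i ∈ K then |w i| else 0 from
    Finset.sum_congr rfl fun i _ => by simp [restr, apply_ite abs]]
  rw [Finset.sum_ite_mem, Finset.univ_inter]

lemma l1_split {n : ℕ} (w : Fin n → ℝ) (K : Finset (Fin n)) :
    l1 w = l1 (restr w K) + l1 (restr w Kᶜ) := by
  rw [l1_restr, l1_restr, Finset.sum_add_sum_compl, l1]

theorem stmt3 {n m : ℕ} (H : Matrix (Fin n) (Fin m) ℝ)
    (x : Fin m → ℝ) (e v y : Fin n → ℝ) (K : Finset (Fin n)) (k : ℕ)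
    (C α σmin ε : ℝ)
    (heK : ∀ i, i ∉ K → e i = 0) (hKk : K.card ≤ k)
    (hv : l2 v ≤ ε)
    (hy : y = H.mulVec x + e + v)
    (hC : 1 < C)
    (hbal : ∀ (u : Fin m → ℝ) (K' : Finset (Fin n)), K'.card ≤ k →
      C * l1 (restr (H.mulVec u) K') ≤ l1 (restr (H.mulVec u) K'ᶜ))
    (hα0 : 0 < α) (hα1 : α ≤ 1)
    (hAE : ∀ u : Fin m → ℝ, α * Real.sqrt n * l2 (H.mulVec u) ≤ l1 (H.mulVec u))
    (hσ : 0 < σmin)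
    (hσmin : ∀ u : Fin m → ℝ, σmin * l2 u ≤ l2 (H.mulVec u))
    (xh : Fin m → ℝ) (zh : Fin n → ℝ)
    (hzh : l2 zh ≤ ε)
    (hopt : ∀ (x' : Fin m → ℝ) (z' : Fin n → ℝ), l2 z' ≤ ε →
      l1 (y - H.mulVec xh - zh) ≤ l1 (y - H.mulVec x' - z')) :
    l2 (x - xh) ≤ 2 * (C + 1) * ε / (σmin * α * (C - 1)) := by
  set d : Fin m → ℝ := x - xh with hd
  set w : Fin n → ℝ := H.mulVec d with hw
  set r : Fin n → ℝ := v - zh with hr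
  have hε : 0 ≤ ε := le_trans (l2_nonneg v) hv
  have hden : 0 < σmin * α * (C - 1) := mul_pos (mul_pos hσ hα0) (by linarith)
  -- degenerate case n = 0
  rcases Nat.eq_zero_or_pos n with hn | hn
  · subst hn
    have h0 : l2 w = 0 := by simp [l2]
    have := hσmin d
    rw [← hw, h0] at this
    have hld : l2 d ≤ 0 := by nlinarith [l2_nonneg d]
    calc l2 (x - xh) = l2 d := rfl
      _ ≤ 0 := hld
      _ ≤ 2 * (C + 1) * ε / (σmin * α * (C - 1)) := div_nonneg (by nlinarith) hden.le
  -- main case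
  have hs : (0:ℝ) < Real.sqrt n := Real.sqrt_pos.mpr (by exact_mod_cast hn)
  have hrε : l2 r ≤ 2 * ε := by
    calc l2 r ≤ l2 v + l2 zh := l2_sub_le v zh
      _ ≤ 2 * ε := by linarith
  have hlr : l1 r ≤ Real.sqrt n * (2 * ε) :=
    (l1_le_sqrt_l2 r).trans (by nlinarith [l2_nonneg r])
  have hyx : y - H.mulVec x - v = e := by rw [hy]; abel
  have hyd : y - H.mulVec xh - zh = w + e + r := by
    rw [hy, hw, hd, hr, Matrix.mulVec_sub]; abel
  have h1 : l1 (w + e + r) ≤ l1 e := by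
    rw [← hyd, ← hyx]; exact hopt x v hv
  have h2 : l1 (w + e) ≤ l1 e + l1 r := by
    have : w + e = (w + e + r) - r := by abel
    rw [this]
    exact (l1_sub_le _ _).trans (by linarith)
  -- split over K
  set S : ℝ := l1 (restr w K) with hS
  set T : ℝ := l1 (restr w Kᶜ) with hT
  have heKsum : l1 e = ∑ i ∈ K, |e i| := by
    rw [l1, ← Finset.sum_add_sum_compl K fun i => |e i|]
    have : ∑ i ∈ Kᶜ, |e i| = 0 :=
      Finset.sum_eq_zero fun i hi => by simp [heK i (Finset.mem_compl.mp hi)]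
    rw [this, add_zero]
  have hsplit : l1 e - S + T ≤ l1 (w + e) := by
    have hA : ∑ i ∈ K, |e i| - ∑ i ∈ K, |w i| ≤ ∑ i ∈ K, |w i + e i| := by
      rw [← Finset.sum_sub_distrib]
      refine Finset.sum_le_sum fun i _ => ?_
      have h := abs_sub_abs_le_abs_sub (e i) (-(w i))
      simp only [abs_neg, sub_neg_eq_add] at h
      calc |e i| - |w i| ≤ |e i + w i| := h
        _ = |w i + e i| := by rw [add_comm]
      done
    have hB : T = ∑ i ∈ Kᶜ, |w i + e i| := by
      rw [hT, l1_restr]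
      exact Finset.sum_congr rfl fun i hi => by
        rw [heK i (Finset.mem_compl.mp hi), add_zero]
    have hC' : l1 (w + e) = ∑ i ∈ K, |w i + e i| + ∑ i ∈ Kᶜ, |w i + e i| := by
      simp only [l1, Pi.add_apply]
      rw [← Finset.sum_add_sum_compl K fun i => |w i + e i|]
    rw [hC', heKsum, hB, hS, l1_restr]
    linarith
  have hTS : T - S ≤ Real.sqrt n * (2 * ε) := by linarith
  have hbalK : C * S ≤ T := hbal d K hKk
  have hSnn : 0 ≤ S := l1_nonneg _
  have hl1w : (C - 1) * l1 w ≤ (C + 1) * (Real.sqrt n * (2 * ε)) := by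
    rw [l1_split w K, ← hS, ← hT]
    nlinarith
  have hAEd : α * Real.sqrt n * l2 w ≤ l1 w := hAE d
  have hσd : σmin * l2 d ≤ l2 w := hσmin d
  rw [le_div_iff₀ hden]
  have hkey : Real.sqrt n * (l2 (x - xh) * (σmin * α * (C - 1))) ≤
      Real.sqrt n * (2 * (C + 1) * ε) := by
    have hld : l2 (x - xh) = l2 d := rfl
    rw [hld]
    nlinarith [l2_nonneg d, l2_nonneg w, l1_nonneg w,
      mul_le_mul_of_nonneg_left hσd (le_of_lt (mul_pos hα0 hs)),
      mul_le_mul_of_nonneg_left hAEd (by linarith : (0:ℝ) ≤ C - 1),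
      mul_le_mul_of_nonneg_left hσd (mul_nonneg (by positivity) (by linarith) : (0:ℝ) ≤ α * Real.sqrt n * (C-1))]
  exact le_of_mul_le_mul_left hkey hs
end
end

section
/- Let h : R^m → R^n and x ∈ R^m, k ≥ 1. Suppose there exists x* ≠ x with ‖h(x) − h(x*)‖₀ ≤ 2k. Then there exists an error vector e with ‖e‖₀ ≤ k such that, with y = h(x) + e, one has ‖y − h(x*)‖₀ ≤ ‖y − h(x)‖₀; i.e., x fails to be the unique minimizer of x' ↦ ‖y − h(x')‖₀. -/
open Finset
noncomputable section
open scoped Classical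

theorem stmt5 {m n : ℕ} (h : (Fin m → ℝ) → (Fin n → ℝ))
    (x xs : Fin m → ℝ) (k : ℕ) (hk : 1 ≤ k)
    (hxs : xs ≠ x) (hsep : l0 (h x - h xs) ≤ 2 * k) :
    ∃ e : Fin n → ℝ, l0 e ≤ k ∧ l0 ((h x + e) - h xs) ≤ l0 ((h x + e) - h x) := by
  set I : Finset (Fin n) := Finset.univ.filter (fun i => (h x - h xs) i ≠ 0) with hI
  have hIcard : I.card ≤ 2 * k := hsep
  obtain ⟨S, hSI, hScard⟩ := Finset.exists_subset_card_eq (min_le_right k I.card)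
  refine ⟨fun i => if i ∈ S then (h xs - h x) i else 0, ?_, ?_⟩
  · calc l0 (fun i => if i ∈ S then (h xs - h x) i else 0)
        ≤ S.card := by
          apply Finset.card_le_card
          intro i hi
          simp only [Finset.mem_filter] at hi
          by_contra hc
          simp [hc] at hi
      _ ≤ k := by rw [hScard]; exact min_le_left _ _
  · have h1 : l0 ((h x + fun i => if i ∈ S then (h xs - h x) i else 0) - h x) = S.card := by
      unfold l0
      congr 1
      ext i
      simp only [Finset.mem_filter, Finset.mem_univ, true_and, Pi.sub_apply, Pi.add_apply]
      constructor
      · intro hi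
        by_contra hc
        simp [hc] at hi
      · intro hi
        have := hSI hi
        rw [hI] at this
        simp only [Finset.mem_filter, Pi.sub_apply] at this
        simp only [hi, if_pos]
        intro hc
        apply this.2
        linarith
    have h2 : l0 ((h x + fun i => if i ∈ S then (h xs - h x) i else 0) - h xs) ≤ I.card - S.card := by
      have : (Finset.univ.filter (fun i => ((h x + fun i => if i ∈ S then (h xs - h x) i else 0) - h xs) i ≠ 0)) ⊆ I \ S := by
        intro i hi
        simp only [Finset.mem_filter, Finset.mem_univ, true_and, Pi.sub_apply, Pi.add_apply] at hi
        by_cases hiS : i ∈ S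
        · simp [hiS] at hi
        · simp only [hiS, if_neg, not_false_iff, add_zero] at hi
          refine Finset.mem_sdiff.mpr ⟨?_, hiS⟩
          rw [hI]
          simp only [Finset.mem_filter, Finset.mem_univ, true_and, Pi.sub_apply]
          intro hc
          apply hi; linarith
      calc l0 _ ≤ (I \ S).card := Finset.card_le_card this
        _ = I.card - S.card := Finset.card_sdiff_of_subset hSI
    rw [h1]
    refine le_trans h2 ?_
    rw [hScard]
    omega
end
end

section
/- Let h : R^m → R^n, let e ∈ R^n be supported on K ⊆ {1,...,n}, and set y = h(x) + e. If for every x* ≠ x one has ‖(h(x) − h(x*))_K‖₁ < ‖(h(x) − h(x*))_{K̄}‖₁, then x is the unique minimizer of x' ↦ ‖y − h(x')‖₁: for every x* ≠ x, ‖y − h(x*)‖₁ > ‖y − h(x)‖₁ = ‖e‖₁. -/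
open Finset
noncomputable section
open scoped Classical

theorem stmt6 {m n : ℕ} (h : (Fin m → ℝ) → (Fin n → ℝ))
    (x : Fin m → ℝ) (e y : Fin n → ℝ) (K : Finset (Fin n))
    (heK : ∀ i, i ∉ K → e i = 0) (hy : y = h x + e)
    (hbal : ∀ xs : Fin m → ℝ, xs ≠ x →
      l1 (restr (h x - h xs) K) < l1 (restr (h x - h xs) Kᶜ)) :
    (l1 (y - h x) = l1 e) ∧
      ∀ xs : Fin m → ℝ, xs ≠ x → l1 (y - h xs) > l1 (y - h x) := by
  have hye : y - h x = e := by
    subst hy; funext i; simp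
  constructor
  · rw [hye]
  intro xs hxs
  rw [hye]
  have hb := hbal xs hxs
  set d : Fin n → ℝ := h x - h xs with hd
  have key : ∀ i : Fin n, |e i| + (|(restr d Kᶜ) i| - |(restr d K) i|) ≤ |(y - h xs) i| := by
    intro i
    have hyi : (y - h xs) i = e i + d i := by
      subst hy; simp [hd]; ring
    rw [hyi]
    by_cases hiK : i ∈ K
    · have : (restr d Kᶜ) i = 0 := by simp [restr, hiK]
      rw [this]
      simp only [restr, if_pos hiK]
      have h3 : |e i| - |d i| ≤ |e i + d i| := by
        have := abs_sub_abs_le_abs_sub (e i) (-(d i))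
        simp only [abs_neg, sub_neg_eq_add] at this
        linarith
      simp only [abs_zero]
      linarith
    · have he0 : e i = 0 := heK i hiK
      have h1 : (restr d K) i = 0 := by simp [restr, hiK]
      have h2 : (restr d Kᶜ) i = d i := by simp [restr, hiK]
      rw [he0, h1, h2]
      simp
  have hsum : ∑ i, (|e i| + (|(restr d Kᶜ) i| - |(restr d K) i|)) ≤ ∑ i, |(y - h xs) i| :=
    Finset.sum_le_sum (fun i _ => key i)
  simp only [Finset.sum_add_distrib, Finset.sum_sub_distrib] at hsum
  simp only [l1] at *
  linarith
end
end

section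
/- Let h : R^m → R^n, x ∈ R^m, and K ⊆ {1,...,n}. Suppose there exists x* ≠ x with ‖(h(x) − h(x*))_K‖₁ ≥ ‖(h(x) − h(x*))_{K̄}‖₁. Then there exists e supported on K (namely e = (h(x*) − h(x))_K) such that with y = h(x) + e, ‖y − h(x*)‖₁ ≤ ‖y − h(x)‖₁; i.e., x is not a strict minimizer of x' ↦ ‖y − h(x')‖₁. -/
open Finset
noncomputable section
open scoped Classical

theorem stmt7 {m n : ℕ} (h : (Fin m → ℝ) → (Fin n → ℝ))
    (x xs : Fin m → ℝ) (K : Finset (Fin n))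
    (hxs : xs ≠ x)
    (hbal : l1 (restr (h x - h xs) K) ≥ l1 (restr (h x - h xs) Kᶜ)) :
    ∃ e : Fin n → ℝ, (∀ i, i ∉ K → e i = 0) ∧
      l1 ((h x + e) - h xs) ≤ l1 ((h x + e) - h x) := by
  refine ⟨restr (h xs - h x) K, fun i hi => by simp [restr, hi], ?_⟩
  have h1 : l1 ((h x + restr (h xs - h x) K) - h xs) = l1 (restr (h x - h xs) Kᶜ) := by
    unfold l1 restr
    apply Finset.sum_congr rfl
    intro i _
    simp only [Pi.add_apply, Pi.sub_apply, Finset.mem_compl]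
    split <;> simp [abs_sub_comm] <;> ring_nf
  have h2 : l1 ((h x + restr (h xs - h x) K) - h x) = l1 (restr (h x - h xs) K) := by
    unfold l1 restr
    apply Finset.sum_congr rfl
    intro i _
    simp only [Pi.add_apply, Pi.sub_apply]
    split <;> simp [abs_sub_comm]
  rw [h1, h2]; exact hbal
end
end

section
/- Let h : R^m → R^n, and suppose for every pair of states x₁, x₂, there exist matrices H^local(x₁) (the Jacobian of h at x₁) and H^true(x₁,x₂) with h(x₂) − h(x₁) = H^true(x₁,x₂)(x₂ − x₁), such that: (i) every w in the range of every H^local satisfies C‖w_K‖₁ ≤ ‖w_{K̄}‖₁ with C > 1, where K is the support of the error vector e; (ii) with σ¹_min(A) := min{‖Az‖₁ : ‖z‖₁ = 1} and σ¹_max(A) := max{‖Az‖₁ : ‖z‖₁ = 1}, one has (2(C+1)/(C−1))·σ¹_max(H^true − H^local)/σ¹_min(H^local) ≤ β < 1 for all pairs of states. Then, with y = h(x) + e (no additive noise, ε = 0), the iteration x^{j+1} = x^j + Δx^{j+1}, where Δx^{j+1} minimizes ‖(y − h(x^j)) − H^local(x^j)·Δx‖₁ over Δx, satisfies ‖x −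 x^{j+1}‖₁ ≤ β‖x − x^j‖₁ for all j, hence x^j → x regardless of the initial point x⁰. -/
open Finset
noncomputable section
open scoped Classical

/-- smallest ℓ¹ gain of a matrix -/
def s1min {n m : ℕ} (A : Matrix (Fin n) (Fin m) ℝ) : ℝ :=
  sInf {r : ℝ | ∃ z : Fin m → ℝ, l1 z = 1 ∧ r = l1 (A.mulVec z)}

/-- induced ℓ¹→ℓ¹ operator norm -/
def s1max {n m : ℕ} (A : Matrix (Fin n) (Fin m) ℝ) : ℝ :=
  sSup {r : ℝ | ∃ z : Fin m → ℝ, l1 z = 1 ∧ r = l1 (A.mulVec z)}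

lemma l1_eq_zero {n : ℕ} {w : Fin n → ℝ} (h : l1 w = 0) : w = 0 := by
  funext i
  have := (Finset.sum_eq_zero_iff_of_nonneg (fun i _ => abs_nonneg (w i))).1 h i (Finset.mem_univ i)
  simpa [abs_eq_zero] using this

lemma l1_smul {n : ℕ} (c : ℝ) (w : Fin n → ℝ) : l1 (c • w) = |c| * l1 w := by
  simp [l1, abs_mul, Finset.mul_sum]

lemma l1_mulVec_bound {n m : ℕ} (A : Matrix (Fin n) (Fin m) ℝ) (z : Fin m → ℝ) :
    l1 (A.mulVec z) ≤ (∑ j, ∑ i, |A i j|) * l1 z := by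
  set M := ∑ j, ∑ i, |A i j| with hM
  calc l1 (A.mulVec z) = ∑ i, |∑ j, A i j * z j| := by
        simp [l1, Matrix.mulVec, dotProduct]
    _ ≤ ∑ i, ∑ j, |A i j| * |z j| :=
        Finset.sum_le_sum fun i _ => (Finset.abs_sum_le_sum_abs _ _).trans (by simp [abs_mul])
    _ = ∑ j, (∑ i, |A i j|) * |z j| := by
        rw [Finset.sum_comm]; simp [Finset.sum_mul]
    _ ≤ ∑ j, M * |z j| := Finset.sum_le_sum fun j _ => by
        have h1 : ∑ i, |A i j| ≤ M :=
          Finset.single_le_sum (f := fun j => ∑ i, |A i j|)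
            (fun _ _ => Finset.sum_nonneg fun _ _ => abs_nonneg _) (Finset.mem_univ j)
        exact mul_le_mul_of_nonneg_right h1 (abs_nonneg _)
    _ = M * l1 z := by rw [l1, Finset.mul_sum]

lemma bddAbove_s1set {n m : ℕ} (A : Matrix (Fin n) (Fin m) ℝ) :
    BddAbove {r : ℝ | ∃ z : Fin m → ℝ, l1 z = 1 ∧ r = l1 (A.mulVec z)} := by
  refine ⟨∑ j, ∑ i, |A i j|, ?_⟩
  rintro r ⟨z, hz, rfl⟩
  have := l1_mulVec_bound A z
  rwa [hz, mul_one] at this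

lemma s1max_spec {n m : ℕ} (A : Matrix (Fin n) (Fin m) ℝ) (z : Fin m → ℝ) :
    l1 (A.mulVec z) ≤ s1max A * l1 z := by
  rcases eq_or_lt_of_le (l1_nonneg z) with h0 | hpos
  · have : z = 0 := l1_eq_zero h0.symm
    simp [this, ← h0, l1]
  · set t := l1 z
    have ht : t ≠ 0 := ne_of_gt hpos
    have hmem : l1 (A.mulVec (t⁻¹ • z)) ∈
        {r : ℝ | ∃ z : Fin m → ℝ, l1 z = 1 ∧ r = l1 (A.mulVec z)} := by
      exact ⟨t⁻¹ • z, by rw [l1_smul, abs_of_pos (inv_pos.2 hpos), inv_mul_cancel₀ ht], rfl⟩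
    have hle := le_csSup (bddAbove_s1set A) hmem
    rw [Matrix.mulVec_smul, l1_smul, abs_of_pos (inv_pos.2 hpos)] at hle
    have := mul_le_mul_of_nonneg_right hle (le_of_lt hpos)
    rw [mul_comm t⁻¹, mul_assoc, inv_mul_cancel₀ ht, mul_one] at this
    rw [s1max, mul_comm]
    linarith [this]

lemma s1min_spec {n m : ℕ} (A : Matrix (Fin n) (Fin m) ℝ) (v : Fin m → ℝ) :
    s1min A * l1 v ≤ l1 (A.mulVec v) := by
  rcases eq_or_lt_of_le (l1_nonneg v) with h0 | hpos
  · have : v = 0 := l1_eq_zero h0.symm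
    simp [this, ← h0, l1]
  · set t := l1 v
    have ht : t ≠ 0 := ne_of_gt hpos
    have hmem : l1 (A.mulVec (t⁻¹ • v)) ∈
        {r : ℝ | ∃ z : Fin m → ℝ, l1 z = 1 ∧ r = l1 (A.mulVec z)} :=
      ⟨t⁻¹ • v, by rw [l1_smul, abs_of_pos (inv_pos.2 hpos), inv_mul_cancel₀ ht], rfl⟩
    have hbd : BddBelow {r : ℝ | ∃ z : Fin m → ℝ, l1 z = 1 ∧ r = l1 (A.mulVec z)} :=
      ⟨0, by rintro r ⟨z, _, rfl⟩; exact l1_nonneg _⟩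
    have hle := csInf_le hbd hmem
    rw [Matrix.mulVec_smul, l1_smul, abs_of_pos (inv_pos.2 hpos)] at hle
    have := mul_le_mul_of_nonneg_right hle (le_of_lt hpos)
    rw [mul_comm t⁻¹, mul_assoc, inv_mul_cancel₀ ht, mul_one] at this
    rw [s1min]
    linarith [this]


lemma s1max_nonneg {n m : ℕ} (A : Matrix (Fin n) (Fin m) ℝ) (hm : 0 < m) :
    0 ≤ s1max A := by
  have hz : l1 (Pi.single (⟨0, hm⟩ : Fin m) (1:ℝ)) = 1 := by
    simp [l1, Pi.single_apply, apply_ite abs]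
  have hmem : l1 (A.mulVec (Pi.single (⟨0, hm⟩ : Fin m) (1:ℝ))) ∈
      {r : ℝ | ∃ z : Fin m → ℝ, l1 z = 1 ∧ r = l1 (A.mulVec z)} := ⟨_, hz, rfl⟩
  exact (l1_nonneg _).trans (le_csSup (bddAbove_s1set A) hmem)

lemma s1min_zero_of_m_eq_zero {n : ℕ} (A : Matrix (Fin n) (Fin 0) ℝ) : s1min A = 0 := by
  have : {r : ℝ | ∃ z : Fin 0 → ℝ, l1 z = 1 ∧ r = l1 (A.mulVec z)} = ∅ := by
    ext r; simp [l1]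
  rw [s1min, this, Real.sInf_empty]

lemma key_ineq {n : ℕ} (K : Finset (Fin n)) (g e w : Fin n → ℝ)
    (he : ∀ i, i ∉ K → e i = 0)
    (hle : l1 (g + e + w) ≤ l1 (g + e)) :
    ∑ i ∈ Kᶜ, |w i| - ∑ i ∈ K, |w i| ≤ 2 * l1 g := by
  have split : ∀ f : Fin n → ℝ, l1 f = ∑ i ∈ K, |f i| + ∑ i ∈ Kᶜ, |f i| :=
    fun f => (Finset.sum_add_sum_compl K _).symm
  simp only [split, Pi.add_apply] at hle
  have hA : ∑ i ∈ K, (|e i| - |g i| - |w i|) ≤ ∑ i ∈ K, |g i + e i + w i| := by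
    refine Finset.sum_le_sum fun i _ => ?_
    have h1 := abs_sub_abs_le_abs_sub (e i) (-(g i + w i))
    have h2 := abs_add_le (g i) (w i)
    rw [abs_neg] at h1
    have h3 : e i - -(g i + w i) = g i + e i + w i := by ring
    rw [h3] at h1
    linarith
  have hB : ∑ i ∈ Kᶜ, (|w i| - |g i|) ≤ ∑ i ∈ Kᶜ, |g i + e i + w i| := by
    refine Finset.sum_le_sum fun i hi => ?_
    have hei : e i = 0 := he i (Finset.mem_compl.1 hi)
    have h1 := abs_sub_abs_le_abs_sub (w i) (-(g i))
    rw [abs_neg] at h1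
    have h3 : w i - -(g i) = g i + e i + w i := by rw [hei]; ring
    rw [h3] at h1
    linarith
  have hC : ∑ i ∈ K, |g i + e i| ≤ ∑ i ∈ K, (|g i| + |e i|) :=
    Finset.sum_le_sum fun i _ => abs_add_le _ _
  have hD : ∑ i ∈ Kᶜ, |g i + e i| = ∑ i ∈ Kᶜ, |g i| :=
    Finset.sum_congr rfl fun i hi => by rw [he i (Finset.mem_compl.1 hi), add_zero]
  rw [Finset.sum_sub_distrib, Finset.sum_sub_distrib] at hA
  rw [Finset.sum_sub_distrib] at hB
  rw [Finset.sum_add_distrib] at hC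
  have hg : l1 g = ∑ i ∈ K, |g i| + ∑ i ∈ Kᶜ, |g i| := split g
  linarith

theorem stmt11 {m n : ℕ} (h : (Fin m → ℝ) → (Fin n → ℝ))
    (x : Fin m → ℝ) (e y : Fin n → ℝ) (K : Finset (Fin n)) (C β : ℝ)
    (Hloc : (Fin m → ℝ) → Matrix (Fin n) (Fin m) ℝ)
    (Htrue : (Fin m → ℝ) → (Fin m → ℝ) → Matrix (Fin n) (Fin m) ℝ)
    (heK : ∀ i, i ∉ K → e i = 0)
    (hy : y = h x + e)
    (hC : 1 < C) (hβ : β < 1)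
    (hfull : ∀ x1 : Fin m → ℝ, 0 < s1min (Hloc x1))
    (hmvt : ∀ x1 x2 : Fin m → ℝ,
      h x2 - h x1 = (Htrue x1 x2).mulVec (x2 - x1))
    (hbal : ∀ (x1 : Fin m → ℝ) (u : Fin m → ℝ),
      C * l1 (restr ((Hloc x1).mulVec u) K) ≤ l1 (restr ((Hloc x1).mulVec u) Kᶜ))
    (hcontr : ∀ x1 x2 : Fin m → ℝ,
      2 * (C + 1) / (C - 1) * (s1max (Htrue x1 x2 - Hloc x1) / s1min (Hloc x1)) ≤ β)
    (xs : ℕ → (Fin m → ℝ)) (d : ℕ → (Fin m → ℝ))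
    (hiter : ∀ j : ℕ, xs (j + 1) = xs j + d j)
    (hmin : ∀ (j : ℕ) (Δ : Fin m → ℝ),
      l1 ((y - h (xs j)) - (Hloc (xs j)).mulVec (d j)) ≤
        l1 ((y - h (xs j)) - (Hloc (xs j)).mulVec Δ)) :
    (∀ j : ℕ, l1 (x - xs (j + 1)) ≤ β * l1 (x - xs j)) ∧
      Filter.Tendsto (fun j => l1 (x - xs j)) Filter.atTop (nhds 0) := by
  rcases Nat.eq_zero_or_pos m with hm | hm
  · exfalso
    subst hm
    have := hfull x
    rw [s1min_zero_of_m_eq_zero] at this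
    exact lt_irrefl 0 this
  have hβ0 : 0 ≤ β := by
    have hσ := hfull x
    have hτ := s1max_nonneg (Htrue x x - Hloc x) hm
    have hc := hcontr x x
    have h0 : (0:ℝ) ≤ 2 * (C + 1) / (C - 1) * (s1max (Htrue x x - Hloc x) / s1min (Hloc x)) :=
      mul_nonneg (div_nonneg (by linarith) (by linarith)) (div_nonneg hτ hσ.le)
    linarith
  have step : ∀ j : ℕ, l1 (x - xs (j + 1)) ≤ β * l1 (x - xs j) := by
    intro j
    have hσ := hfull (xs j)
    have hτ := s1max_nonneg (Htrue (xs j) x - Hloc (xs j)) hm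
    have hsplit : x - xs (j + 1) = (x - xs j) - d j := by rw [hiter j]; abel
    have hres : y - h (xs j) - (Hloc (xs j)).mulVec (x - xs j)
        = (Htrue (xs j) x - Hloc (xs j)).mulVec (x - xs j) + e := by
      rw [hy, Matrix.sub_mulVec, ← hmvt (xs j) x]; abel
    have hws : (Hloc (xs j)).mulVec ((x - xs j) - d j)
        = (Hloc (xs j)).mulVec (x - xs j) - (Hloc (xs j)).mulVec (d j) :=
      Matrix.mulVec_sub _ _ _
    have hres2 : y - h (xs j) - (Hloc (xs j)).mulVec (d j)
        = ((Htrue (xs j) x - Hloc (xs j)).mulVec (x - xs j) + e)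
          + (Hloc (xs j)).mulVec ((x - xs j) - d j) := by
      rw [hws, ← hres]; abel
    have hle := hmin j (x - xs j)
    rw [hres2, hres] at hle
    have hKey := key_ineq K ((Htrue (xs j) x - Hloc (xs j)).mulVec (x - xs j)) e
        ((Hloc (xs j)).mulVec ((x - xs j) - d j)) heK hle
    have hbl := hbal (xs j) ((x - xs j) - d j)
    rw [l1_restr, l1_restr] at hbl
    have hwsum : l1 ((Hloc (xs j)).mulVec ((x - xs j) - d j))
        = (∑ i ∈ K, |(Hloc (xs j)).mulVec ((x - xs j) - d j) i|)
          + ∑ i ∈ Kᶜ, |(Hloc (xs j)).mulVec ((x - xs j) - d j) i| :=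
      (Finset.sum_add_sum_compl K _).symm
    have hW : (C - 1) * l1 ((Hloc (xs j)).mulVec ((x - xs j) - d j))
        ≤ 2 * (C + 1) * l1 ((Htrue (xs j) x - Hloc (xs j)).mulVec (x - xs j)) := by
      rw [hwsum]
      have hK2 := mul_le_mul_of_nonneg_left hKey (by linarith : (0:ℝ) ≤ C)
      linarith
    have h1 : s1min (Hloc (xs j)) * l1 (x - xs (j + 1))
        ≤ l1 ((Hloc (xs j)).mulVec ((x - xs j) - d j)) := by
      rw [hsplit]; exact s1min_spec _ _
    have h2 : l1 ((Htrue (xs j) x - Hloc (xs j)).mulVec (x - xs j))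
        ≤ s1max (Htrue (xs j) x - Hloc (xs j)) * l1 (x - xs j) :=
      s1max_spec _ _
    have hc := hcontr (xs j) x
    have hposd : 0 < (C - 1) * s1min (Hloc (xs j)) := mul_pos (by linarith) hσ
    rw [div_mul_div_comm, div_le_iff₀ hposd] at hc
    have p1 : (C - 1) * (s1min (Hloc (xs j)) * l1 (x - xs (j + 1)))
        ≤ (C - 1) * l1 ((Hloc (xs j)).mulVec ((x - xs j) - d j)) :=
      mul_le_mul_of_nonneg_left h1 (by linarith)
    have p2 : 2 * (C + 1) * l1 ((Htrue (xs j) x - Hloc (xs j)).mulVec (x - xs j))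
        ≤ 2 * (C + 1) * (s1max (Htrue (xs j) x - Hloc (xs j)) * l1 (x - xs j)) :=
      mul_le_mul_of_nonneg_left h2 (by linarith)
    have p3 : (2 * (C + 1) * s1max (Htrue (xs j) x - Hloc (xs j))) * l1 (x - xs j)
        ≤ (β * ((C - 1) * s1min (Hloc (xs j)))) * l1 (x - xs j) :=
      mul_le_mul_of_nonneg_right hc (l1_nonneg _)
    nlinarith [p1, p2, p3, hW, hposd, l1_nonneg (x - xs (j + 1)), l1_nonneg (x - xs j)]
  refine ⟨step, ?_⟩
  have geom : ∀ j : ℕ, l1 (x - xs j) ≤ β ^ j * l1 (x - xs 0) := by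
    intro j
    induction j with
    | zero => simp
    | succ k ih =>
        calc l1 (x - xs (k + 1)) ≤ β * l1 (x - xs k) := step k
          _ ≤ β * (β ^ k * l1 (x - xs 0)) := mul_le_mul_of_nonneg_left ih hβ0
          _ = β ^ (k + 1) * l1 (x - xs 0) := by ring
  have h0 : Filter.Tendsto (fun j => β ^ j * l1 (x - xs 0)) Filter.atTop (nhds 0) := by
    have := tendsto_pow_atTop_nhds_zero_of_lt_one hβ0 hβ
    simpa using this.mul_const (l1 (x - xs 0))
  exact squeeze_zero (fun j => l1_nonneg _) geom h0
end
end

section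
/- Fix u₂ ≥ 0 and α ∈ (0,1], and let S = {w ∈ R^n : ‖w‖₂ = 1, wᵢ ≥ 0 for all i, Σᵢ wᵢ ≤ α√n}. Then for every h ∈ R^n with hᵢ ≥ 0, sup_{w ∈ S} ⟨h, w⟩ ≤ sqrt(Σ_{i : hᵢ > u₂} (hᵢ − u₂)²) + α√n·u₂. -/
open Finset
noncomputable section
open scoped Classical

theorem stmt16 {n : ℕ} (u2 α : ℝ) (hu2 : 0 ≤ u2) (hα0 : 0 < α) (hα1 : α ≤ 1)
    (h : Fin n → ℝ) (hh : ∀ i, 0 ≤ h i) :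
    ∀ w : Fin n → ℝ, l2 w = 1 → (∀ i, 0 ≤ w i) → (∑ i, w i) ≤ α * Real.sqrt n →
      (∑ i, h i * w i) ≤
        Real.sqrt (∑ i ∈ Finset.univ.filter (fun i => u2 < h i), (h i - u2) ^ 2)
          + α * Real.sqrt n * u2 := by
  intro w hw2 hwpos hwsum
  set g : Fin n → ℝ := fun i => max (h i - u2) 0 with hg
  have step1 : (∑ i, h i * w i) ≤ (∑ i, g i * w i) + u2 * ∑ i, w i := by
    rw [Finset.mul_sum, ← Finset.sum_add_distrib]
    apply Finset.sum_le_sum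
    intro i _
    have : h i * w i = (h i - u2) * w i + u2 * w i := by ring
    rw [this]
    have : (h i - u2) * w i ≤ g i * w i :=
      mul_le_mul_of_nonneg_right (le_max_left _ _) (hwpos i)
    linarith
  have cs : (∑ i, g i * w i) ≤ Real.sqrt (∑ i, (g i) ^ 2) * Real.sqrt (∑ i, (w i) ^ 2) :=
    Real.sum_mul_le_sqrt_mul_sqrt Finset.univ g w
  have hgsq : (∑ i, (g i) ^ 2) = ∑ i ∈ Finset.univ.filter (fun i => u2 < h i), (h i - u2) ^ 2 := by
    rw [← Finset.sum_filter_add_sum_filter_not Finset.univ (fun i => u2 < h i) (fun i => (g i)^2)]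
    have h1 : ∀ i ∈ Finset.univ.filter (fun i => u2 < h i), (g i)^2 = (h i - u2)^2 := by
      intro i hi
      simp only [Finset.mem_filter] at hi
      simp [hg, max_eq_left (by linarith [hi.2] : (0:ℝ) ≤ h i - u2)]
    have h2 : ∀ i ∈ Finset.univ.filter (fun i => ¬ u2 < h i), (g i)^2 = 0 := by
      intro i hi
      simp only [Finset.mem_filter, not_lt] at hi
      simp [hg, max_eq_right (by linarith [hi.2] : h i - u2 ≤ (0:ℝ))]
    rw [Finset.sum_congr rfl h1, Finset.sum_congr rfl h2]
    simp
  have hw1 : Real.sqrt (∑ i, (w i) ^ 2) = 1 := hw2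
  have hu : u2 * ∑ i, w i ≤ α * Real.sqrt n * u2 := by
    have := mul_le_mul_of_nonneg_left hwsum hu2
    linarith [this]
  calc (∑ i, h i * w i) ≤ (∑ i, g i * w i) + u2 * ∑ i, w i := step1
    _ ≤ Real.sqrt (∑ i, (g i) ^ 2) * 1 + α * Real.sqrt n * u2 := by
        rw [← hw1]; exact add_le_add cs hu
    _ = Real.sqrt (∑ i ∈ Finset.univ.filter (fun i => u2 < h i), (h i - u2) ^ 2)
          + α * Real.sqrt n * u2 := by rw [hgsq, mul_one]
end
end

section
/- Let L be a linear subspace of R^n that satisfies α√n‖w‖₂ ≤ ‖w‖₁ for all w ∈ L, where α ∈ (0,1]. Let K ⊆ {1,...,n} with |K| = k, and suppose k/n < α²/4 (equivalently, 2√(k/n) < α). Then every nonzero w ∈ L satisfies ‖w_K‖₁ < ‖w_{K̄}‖₁ (i.e., the balancedness condition holds with C = 1 strictly). -/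
open Finset
noncomputable section
open scoped Classical

theorem stmt17 {n : ℕ} (L : Submodule ℝ (Fin n → ℝ)) (α : ℝ) (K : Finset (Fin n)) (k : ℕ)
    (hα0 : 0 < α) (hα1 : α ≤ 1)
    (hAE : ∀ w ∈ L, α * Real.sqrt n * l2 w ≤ l1 w)
    (hK : K.card = k) (hkn : (k : ℝ) / n < α ^ 2 / 4) :
    ∀ w ∈ L, w ≠ 0 → l1 (restr w K) < l1 (restr w Kᶜ) := by
  intro w hw hw0
  have hn : 0 < n := by
    rcases Nat.eq_zero_or_pos n with h | h
    · subst h; exact absurd (funext fun i => i.elim0) hw0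
    · exact h
  obtain ⟨i0, hi0⟩ := Function.ne_iff.mp hw0
  simp only [Pi.zero_apply] at hi0
  have hsq : (0:ℝ) < ∑ i, (w i)^2 :=
    Finset.sum_pos' (fun j _ => sq_nonneg _)
      ⟨i0, Finset.mem_univ i0, by positivity⟩
  have hl2pos : 0 < l2 w := Real.sqrt_pos.mpr hsq
  have hl2sq : (l2 w) ^ 2 = ∑ i, (w i)^2 := Real.sq_sqrt hsq.le
  have hsplit : l1 (restr w K) + l1 (restr w Kᶜ) = l1 w := by
    unfold l1 restr
    rw [← Finset.sum_add_distrib]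
    refine Finset.sum_congr rfl fun i _ => ?_
    by_cases h : i ∈ K <;> simp [h]
  have hA : l1 (restr w K) = ∑ i ∈ K, |w i| := by
    unfold l1 restr
    simp only [apply_ite abs, abs_zero]
    rw [Finset.sum_ite_mem, Finset.univ_inter]
  have hAnn : 0 ≤ l1 (restr w K) := by
    rw [hA]; exact Finset.sum_nonneg fun i _ => abs_nonneg _
  have hCS : (l1 (restr w K)) ^ 2 ≤ (k:ℝ) * (l2 w) ^ 2 := by
    rw [hA, hl2sq]
    have h1 : (∑ i ∈ K, |w i|) ^ 2 ≤ (K.card : ℝ) * ∑ i ∈ K, |w i| ^ 2 :=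
      sq_sum_le_card_mul_sum_sq
    have h2 : ∑ i ∈ K, |w i| ^ 2 ≤ ∑ i, (w i)^2 := by
      refine (Finset.sum_le_sum_of_subset_of_nonneg (Finset.subset_univ K)
        (fun i _ _ => sq_nonneg _)).trans_eq ?_
      exact Finset.sum_congr rfl fun i _ => sq_abs _
    calc (∑ i ∈ K, |w i|) ^ 2 ≤ (K.card : ℝ) * ∑ i ∈ K, |w i| ^ 2 := h1
      _ ≤ (k:ℝ) * ∑ i, (w i)^2 := by
          rw [hK]; exact mul_le_mul_of_nonneg_left h2 (by positivity)
  have hAE' := hAE w hw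
  have hsn : Real.sqrt n ^ 2 = (n:ℝ) := Real.sq_sqrt (Nat.cast_nonneg n)
  have hsn0 : 0 ≤ Real.sqrt n := Real.sqrt_nonneg n
  have hkn' : 4 * (k:ℝ) < α ^ 2 * n := by
    rw [div_lt_div_iff₀ (by exact_mod_cast hn) (by norm_num)] at hkn
    linarith
  have hsnp : 0 < Real.sqrt n := Real.sqrt_pos.mpr (by exact_mod_cast hn)
  have hE : α ^ 2 * n * (l2 w) ^ 2 ≤ (l1 w) ^ 2 := by
    have h := mul_self_le_mul_self
      (show (0:ℝ) ≤ α * Real.sqrt n * l2 w by positivity) hAE'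
    have heq : (α * Real.sqrt n * l2 w) * (α * Real.sqrt n * l2 w)
        = α ^ 2 * (Real.sqrt n ^ 2) * (l2 w) ^ 2 := by ring
    rw [hsn] at heq
    calc α ^ 2 * n * (l2 w) ^ 2
        = (α * Real.sqrt n * l2 w) * (α * Real.sqrt n * l2 w) := heq.symm
      _ ≤ l1 w * l1 w := h
      _ = (l1 w) ^ 2 := (sq (l1 w)).symm
  have hL0 : 0 < l1 w :=
    lt_of_lt_of_le (by positivity) hAE'
  have h4 : 4 * (l1 (restr w K)) ^ 2 < (l1 w) ^ 2 := by
    nlinarith [mul_lt_mul_of_pos_right hkn' (pow_pos hl2pos 2)]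
  have hkey : 2 * l1 (restr w K) < l1 w := by
    nlinarith [h4, hAnn, hL0]
  linarith
end
end
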